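/- Let g ≥ 1 and let R be a commutative ring in which 2 is not a zero divisor. For u, v ∈ (ℤ/2ℤ)^g write l_u(v) = ∏_{i=1}^g (−1)^{u_i v_i} ∈ {1,−1}, computed via representatives u_i, v_i ∈ {0,1}. Suppose a, b : (ℤ/2ℤ)^g → R satisfy, for all u ∈ (ℤ/2ℤ)^g, the theta relation a(u)² = Σ_{v ∈ (ℤ/2ℤ)^g} b(u+v)·b(v). Define y(u) = Σ_{v} l_u(v)·a(v) and z(u) = Σ_{v} l_u(v)·b(v). Then for all u ∈ (ℤ/2ℤ)^g: 2^g · z(u)² = Σ_{v ∈ (ℤ/2ℤ)^g} y(u+v)·y(v). (Thus the Hadamard-type transform x(u) = y(u)², x'(u) = z(u)² carries the theta relation into the AGM relation x'(u) = 2^{-g} Σ_v √(x(u+v) x(v)).) -/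

import Mathlib

section aux
variable {R : Type*} [CommRing R] {g : ℕ}

private def L (u v : Fin g → ZMod 2) : R := ∏ i : Fin g, (-1 : R) ^ ((u i).val * (v i).val)

private lemma zmod2_cases : ∀ x : ZMod 2, x = 0 ∨ x = 1 := by decide

private lemma val_zero : (0 : ZMod 2).val = 0 := rfl
private lemma val_one : (1 : ZMod 2).val = 1 := rfl
private lemma val_two : ((1 : ZMod 2) + 1).val = 0 := rfl
private lemma neg_self (t : Fin g → ZMod 2) : -t = t := by
  funext i
  rcases zmod2_cases (t i) with h | h <;> rw [Pi.neg_apply, h] <;> rfl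

private lemma neg1_add (x y z : ZMod 2) :
    ((-1:R) ^ ((x+y).val * z.val)) = (-1:R) ^ (x.val * z.val) * (-1:R) ^ (y.val * z.val) := by
  rcases zmod2_cases x with h | h <;> rcases zmod2_cases y with h' | h' <;>
    rcases zmod2_cases z with h'' | h'' <;> subst h <;> subst h' <;> subst h'' <;> simp [val_zero, val_one, val_two]

private lemma L_add_left (u v s : Fin g → ZMod 2) : (L (u+v) s : R) = L u s * L v s := by
  simp only [L, ← Finset.prod_mul_distrib]
  exact Finset.prod_congr rfl fun i _ => neg1_add _ _ _

private lemma L_symm (u v : Fin g → ZMod 2) : (L u v : R) = L v u := by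
  simp [L, Nat.mul_comm]

private lemma L_add_right (u s t : Fin g → ZMod 2) : (L u (s+t) : R) = L u s * L u t := by
  rw [L_symm, L_add_left, L_symm s u, L_symm t u]

private lemma L_sq (u v : Fin g → ZMod 2) : (L u v : R) * L u v = 1 := by
  simp only [L, ← Finset.prod_mul_distrib, ← pow_add]
  apply Finset.prod_eq_one
  intro i _
  exact Even.neg_one_pow ⟨_, rfl⟩

private lemma L_zero_left (v : Fin g → ZMod 2) : (L 0 v : R) = 1 := by
  simp [L]

private lemma L_orth (h2 : ∀ r : R, 2 * r = 0 → r = 0) (w : Fin g → ZMod 2) :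
    (∑ v : Fin g → ZMod 2, (L w v : R)) = if w = 0 then (2:R)^g else 0 := by
  rcases eq_or_ne w 0 with hw | hw
  · subst hw
    simp [L_zero_left, Finset.card_univ, Fintype.card_fun]
  · simp only [if_neg hw]
    obtain ⟨i, hi⟩ : ∃ i, w i ≠ 0 := by
      by_contra h
      push_neg at h
      exact hw (funext fun i => h i)
    have hwi : (w i).val = 1 := by
      rcases zmod2_cases (w i) with h | h
      · exact absurd h hi
      · rw [h]; rfl
    set δ : Fin g → ZMod 2 := fun j => if j = i then 1 else 0 with hδ
    have hLδ : (L w δ : R) = -1 := by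
      simp only [L, hδ]
      rw [Finset.prod_eq_single i]
      · simp [hwi, val_one]
      · intro j _ hj; simp [hj]
      · intro h; exact absurd (Finset.mem_univ i) h
    have hshift : (∑ v : Fin g → ZMod 2, (L w v : R)) =
        ∑ v : Fin g → ZMod 2, (L w (v + δ) : R) :=
      (Fintype.sum_equiv (Equiv.addRight δ) _ _ (fun v => rfl)).symm
    have hneg : (∑ v : Fin g → ZMod 2, (L w (v + δ) : R)) = - ∑ v : Fin g → ZMod 2, (L w v : R) := by
      simp only [L_add_right, hLδ, mul_neg, mul_one]
      exact Finset.sum_neg_distrib (f := fun v => (L w v : R))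
    apply h2
    linear_combination hshift + hneg

end aux

theorem theta_to_agm (R : Type*) [CommRing R] (g : ℕ) (hg : 1 ≤ g)
    (h2 : ∀ r : R, 2 * r = 0 → r = 0)
    (a b : (Fin g → ZMod 2) → R)
    (htheta : ∀ u : Fin g → ZMod 2,
      (a u) ^ 2 = ∑ v : Fin g → ZMod 2, b (u + v) * b v)
    (y z : (Fin g → ZMod 2) → R)
    (hy : ∀ u : Fin g → ZMod 2,
      y u = ∑ v : Fin g → ZMod 2, (∏ i : Fin g, (-1 : R) ^ ((u i).val * (v i).val)) * a v)
    (hz : ∀ u : Fin g → ZMod 2,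
      z u = ∑ v : Fin g → ZMod 2, (∏ i : Fin g, (-1 : R) ^ ((u i).val * (v i).val)) * b v) :
    ∀ u : Fin g → ZMod 2,
      2 ^ g * (z u) ^ 2 = ∑ v : Fin g → ZMod 2, y (u + v) * y v := by
  intro u
  have hy' : ∀ u : Fin g → ZMod 2, y u = ∑ v : Fin g → ZMod 2, (L u v : R) * a v := hy
  have hz' : ∀ u : Fin g → ZMod 2, z u = ∑ v : Fin g → ZMod 2, (L u v : R) * b v := hz
  -- common middle expression
  have lhs : 2 ^ g * (z u) ^ 2 =
      2 ^ g * ∑ w : Fin g → ZMod 2, (L u w : R) * ∑ t : Fin g → ZMod 2, b (w + t) * b t := by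
    rw [hz', sq, Finset.sum_mul_sum]
    congr 1
    rw [Finset.sum_comm]
    have : ∀ t : Fin g → ZMod 2,
        (∑ s : Fin g → ZMod 2, (L u s : R) * b s * ((L u t : R) * b t)) =
        ∑ w : Fin g → ZMod 2, (L u w : R) * (b (w + t) * b t) := by
      intro t
      rw [← Fintype.sum_equiv (Equiv.addRight t)
        (fun w => (L u w : R) * (b (w + t) * b t))
        (fun s => (L u s : R) * b s * ((L u t : R) * b t)) ?_]
      intro w
      simp only [Equiv.coe_addRight, L_add_right]
      linear_combination (-(L (R := R) u w * b (w + t) * b t)) * L_sq (R := R) u t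
    rw [Finset.sum_congr rfl fun t _ => this t, Finset.sum_comm]
    exact Finset.sum_congr rfl fun w _ => by rw [Finset.mul_sum]
  rw [lhs]
  -- RHS
  have expand : ∀ v : Fin g → ZMod 2, y (u + v) * y v =
      ∑ s : Fin g → ZMod 2, ∑ t : Fin g → ZMod 2,
        ((L u s : R) * a s * a t) * (L v (s + t) : R) := by
    intro v
    rw [hy', hy', Finset.sum_mul_sum]
    refine Finset.sum_congr rfl fun s _ => Finset.sum_congr rfl fun t _ => ?_
    rw [L_add_left, L_add_right]
    ring
  calc 2 ^ g * ∑ w : Fin g → ZMod 2, (L u w : R) * ∑ t : Fin g → ZMod 2, b (w + t) * b t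
      = ∑ s : Fin g → ZMod 2, ((L u s : R) * a s * a s) * (2:R) ^ g := by
        rw [Finset.mul_sum]
        refine Finset.sum_congr rfl fun s _ => ?_
        rw [← htheta s]
        ring
    _ = ∑ s : Fin g → ZMod 2, ∑ t : Fin g → ZMod 2,
          ((L u s : R) * a s * a t) * ∑ v : Fin g → ZMod 2, (L v (s + t) : R) := by
        refine Finset.sum_congr rfl fun s _ => ?_
        have hkey : ∀ t : Fin g → ZMod 2,
            (∑ v : Fin g → ZMod 2, (L v (s + t) : R)) = if t = s then (2:R)^g else 0 := by
          intro t
          rw [Finset.sum_congr rfl fun v _ => L_symm v (s+t), L_orth h2]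
          have : s + t = 0 ↔ t = s := by
            rw [add_comm, add_eq_zero_iff_eq_neg, neg_self]
          simp only [this]
        rw [Finset.sum_congr rfl fun t _ => by rw [hkey t]]
        symm
        rw [Finset.sum_eq_single s]
        · simp
        · intro t _ hts; simp [hts]
        · intro h; exact absurd (Finset.mem_univ s) h
    _ = ∑ v : Fin g → ZMod 2, y (u + v) * y v := by
        have swap : (∑ v : Fin g → ZMod 2, ∑ s : Fin g → ZMod 2, ∑ t : Fin g → ZMod 2,
              ((L u s : R) * a s * a t) * (L v (s + t) : R)) =
            ∑ s : Fin g → ZMod 2, ∑ t : Fin g → ZMod 2, ∑ v : Fin g → ZMod 2,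
              ((L u s : R) * a s * a t) * (L v (s + t) : R) := by
          rw [Finset.sum_comm]
          exact Finset.sum_congr rfl fun s _ => Finset.sum_comm
        rw [Finset.sum_congr rfl fun v _ => expand v, swap]
        exact Finset.sum_congr rfl fun s _ => Finset.sum_congr rfl fun t _ =>
          Finset.mul_sum _ _ _
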